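/- Let Γ be a connected infinite vertex-transitive and arc-transitive locally finite digraph with finite in- and out-valencies, and fix α ∈ VΓ. For γ at distance r from α define c(γ) = |S₁(α) ∩ S_{r−1}(γ)| and b(γ) = |S₁(α) ∩ S_{r+1}(γ)|. If there exists R₀ such that c(β) = c(γ) and b(β) = b(γ) for all β, γ at distance more than R₀ from α, then Γ has more than one end: there exists an infinite set s of vertices whose complement is infinite and such that only finitely many edges join s to its complement. -/

import Mathlib

open SimpleGraph

namespace Stmt13Aux

variable {V : Type*}

/-- the set of neighbours of `x` that are nearer to `y`. -/
def Cset (Γ : SimpleGraph V) (x y : V) : Set V :=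
  {w | Γ.dist x w = 1 ∧ Γ.dist y w = Γ.dist x y - 1}

/-- the set of neighbours of `x` that are farther from `y`. -/
def Bset (Γ : SimpleGraph V) (x y : V) : Set V :=
  {w | Γ.dist x w = 1 ∧ Γ.dist y w = Γ.dist x y + 1}

variable {Γ : SimpleGraph V}

lemma Cset_finite (hfin : ∀ v, (Γ.neighborSet v).Finite) (x y : V) : (Cset Γ x y).Finite :=
  (hfin x).subset fun w hw => by
    simpa [SimpleGraph.mem_neighborSet, ← SimpleGraph.dist_eq_one_iff_adj] using hw.1

lemma Bset_finite (hfin : ∀ v, (Γ.neighborSet v).Finite) (x y : V) : (Bset Γ x y).Finite :=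
  (hfin x).subset fun w hw => by
    simpa [SimpleGraph.mem_neighborSet, ← SimpleGraph.dist_eq_one_iff_adj] using hw.1

lemma exists_closer (hconn : Γ.Connected) {x v : V} (h : 1 ≤ Γ.dist x v) :
    ∃ w, Γ.Adj v w ∧ Γ.dist x w + 1 = Γ.dist x v := by
  obtain ⟨p, hp⟩ := hconn.exists_walk_length_eq_dist v x
  cases p with
  | nil => simp at hp; rw [SimpleGraph.dist_comm] at h; simp at h
  | cons hadj q =>
    rename_i c
    refine ⟨c, hadj, ?_⟩
    have h1 : Γ.dist x c ≤ q.length := by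
      simpa using dist_le q.reverse
    have h2 : Γ.dist x v ≤ Γ.dist x c + 1 := by
      have := hconn.dist_triangle (u := x) (v := c) (w := v)
      have hc : Γ.dist c v = 1 := dist_eq_one_iff_adj.mpr hadj.symm
      omega
    have h3 : Γ.dist x v = q.length + 1 := by
      rw [SimpleGraph.dist_comm]; simpa using hp.symm
    omega

lemma ball_finite (hconn : Γ.Connected) (hfin : ∀ v, (Γ.neighborSet v).Finite) (x : V) :
    ∀ n, {v | Γ.dist x v ≤ n}.Finite := by
  intro n
  induction n with
  | zero =>
    refine (Set.finite_singleton x).subset fun v hv => ?_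
    have : Γ.dist x v = 0 := by simpa using hv
    simp [(hconn.dist_eq_zero_iff).mp this]
  | succ n ih =>
    refine ((ih.union (ih.biUnion fun w _ => hfin w))).subset fun v hv => ?_
    simp only [Set.mem_setOf_eq] at hv
    by_cases hle : Γ.dist x v ≤ n
    · exact Or.inl hle
    · have h1 : 1 ≤ Γ.dist x v := by omega
      obtain ⟨w, hadj, hw⟩ := exists_closer hconn h1
      exact Or.inr (Set.mem_biUnion (show Γ.dist x w ≤ n by omega) hadj.symm)

lemma exists_dist_eq [Infinite V] (hconn : Γ.Connected)
    (hfin : ∀ v, (Γ.neighborSet v).Finite) (x : V) (n : ℕ) : ∃ v, Γ.dist x v = n := by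
  obtain ⟨v, hv⟩ := (ball_finite hconn hfin x n).infinite_compl.nonempty
  simp only [Set.mem_compl_iff, Set.mem_setOf_eq, not_le] at hv
  suffices H : ∀ k v, Γ.dist x v = n + k → ∃ u, Γ.dist x u = n by
    exact H (Γ.dist x v - n) v (by omega)
  intro k
  induction k with
  | zero => exact fun v h => ⟨v, by omega⟩
  | succ k ih =>
    intro v h
    obtain ⟨w, hadj, hw⟩ := exists_closer hconn (x := x) (v := v) (by omega)
    exact ih w (by omega)



-- chunk2
variable {R₀ : ℕ}

section Structural

variable (hconn : Γ.Connected) (hfin : ∀ v, (Γ.neighborSet v).Finite)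
variable (hcC : ∀ x y x' y', R₀ < Γ.dist x y → R₀ < Γ.dist x' y' →
  (Cset Γ x y).ncard = (Cset Γ x' y').ncard)
variable (hcB : ∀ x y x' y', R₀ < Γ.dist x y → R₀ < Γ.dist x' y' →
  (Bset Γ x y).ncard = (Bset Γ x' y').ncard)

include hconn hfin hcC in
lemma upC {x y y' : V} (hadj : Γ.Adj y y') (hd : Γ.dist x y' = Γ.dist x y + 1)
    (hfar : R₀ < Γ.dist x y) : Cset Γ x y = Cset Γ x y' := by
  refine Set.eq_of_subset_of_ncard_le ?_ (le_of_eq (hcC x y' x y (by omega) hfar))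
    (Cset_finite hfin x y')
  rintro u ⟨hu1, hu2⟩
  refine ⟨hu1, ?_⟩
  have t1 : Γ.dist y' u ≤ Γ.dist y' y + Γ.dist y u := hconn.dist_triangle
  have t2 : Γ.dist x y' ≤ Γ.dist x u + Γ.dist u y' := hconn.dist_triangle
  have hyy' : Γ.dist y' y = 1 := dist_eq_one_iff_adj.mpr hadj.symm
  have e1 : Γ.dist u y' = Γ.dist y' u := dist_comm ..
  omega

include hconn hfin hcB in
lemma upB {x y y' : V} (hadj : Γ.Adj y y') (hd : Γ.dist x y' = Γ.dist x y + 1)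
    (hfar : R₀ < Γ.dist x y) : Bset Γ x y = Bset Γ x y' := by
  refine (Set.eq_of_subset_of_ncard_le ?_ (le_of_eq (hcB x y x y' hfar (by omega)))
    (Bset_finite hfin x y)).symm
  rintro u ⟨hu1, hu2⟩
  refine ⟨hu1, ?_⟩
  have t1 : Γ.dist y u ≤ Γ.dist y x + Γ.dist x u := hconn.dist_triangle
  have t2 : Γ.dist y' u ≤ Γ.dist y' y + Γ.dist y u := hconn.dist_triangle
  have hyy' : Γ.dist y' y = 1 := dist_eq_one_iff_adj.mpr hadj.symm
  have e1 : Γ.dist y x = Γ.dist x y := dist_comm ..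
  omega

include hconn hfin hcC hcB in
lemma sameC {x y y' : V} (hadj : Γ.Adj y y') (hd : Γ.dist x y' = Γ.dist x y)
    (hfar : R₀ + 2 ≤ Γ.dist x y) : Cset Γ x y = Cset Γ x y' := by
  have key : ∀ y y', Γ.Adj y y' → Γ.dist x y' = Γ.dist x y → R₀ + 2 ≤ Γ.dist x y →
      Cset Γ x y ⊆ Cset Γ x y' := by
    intro y y' hadj hd hfar u hu
    obtain ⟨hu1, hu2⟩ := hu
    have hyy' : Γ.dist y y' = 1 := dist_eq_one_iff_adj.mpr hadj
    have t1 : Γ.dist y' u ≤ Γ.dist y' y + Γ.dist y u := hconn.dist_triangle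
    have t2 : Γ.dist x y' ≤ Γ.dist x u + Γ.dist u y' := hconn.dist_triangle
    have e1 : Γ.dist u y' = Γ.dist y' u := dist_comm ..
    have e2 : Γ.dist y' y = Γ.dist y y' := dist_comm ..
    by_cases hcase : Γ.dist y' u = Γ.dist x y - 1
    · exact ⟨hu1, by omega⟩
    · exfalso
      have hy'u : Γ.dist y' u = Γ.dist x y := by omega
      have e3 : Γ.dist u y = Γ.dist y u := dist_comm ..
      have hBeq : Bset Γ u y = Bset Γ u y' :=
        upB hconn hfin hcB hadj (by omega) (by omega)
      have hxB : x ∈ Bset Γ u y := by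
        refine ⟨by rw [dist_comm]; exact hu1, ?_⟩
        have e4 : Γ.dist y x = Γ.dist x y := dist_comm ..
        omega
      rw [hBeq] at hxB
      obtain ⟨-, hxB2⟩ := hxB
      have e5 : Γ.dist y' x = Γ.dist x y' := dist_comm ..
      omega
  exact (key y y' hadj hd hfar).antisymm (key y' y hadj.symm (by omega) (by omega))

include hconn hfin hcC hcB in
lemma sameB {x y y' : V} (hadj : Γ.Adj y y') (hd : Γ.dist x y' = Γ.dist x y)
    (hfar : R₀ + 2 ≤ Γ.dist x y) : Bset Γ x y = Bset Γ x y' := by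
  have key : ∀ y y', Γ.Adj y y' → Γ.dist x y' = Γ.dist x y → R₀ + 2 ≤ Γ.dist x y →
      Bset Γ x y ⊆ Bset Γ x y' := by
    intro y y' hadj hd hfar v hv
    obtain ⟨hv1, hv2⟩ := hv
    have hyy' : Γ.dist y y' = 1 := dist_eq_one_iff_adj.mpr hadj
    have t1 : Γ.dist y' v ≤ Γ.dist y' x + Γ.dist x v := hconn.dist_triangle
    have t2 : Γ.dist y v ≤ Γ.dist y y' + Γ.dist y' v := hconn.dist_triangle
    have e1 : Γ.dist y' x = Γ.dist x y' := dist_comm ..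
    by_cases hcase : Γ.dist y' v = Γ.dist x y + 1
    · exact ⟨hv1, by omega⟩
    · exfalso
      have hy'v : Γ.dist y' v = Γ.dist x y := by omega
      have e3 : Γ.dist v y' = Γ.dist y' v := dist_comm ..
      have e4 : Γ.dist v y = Γ.dist y v := dist_comm ..
      have hCeq : Cset Γ v y' = Cset Γ v y :=
        upC hconn hfin hcC hadj.symm (by omega) (by omega)
      have hxC : x ∈ Cset Γ v y := by
        refine ⟨by rw [dist_comm]; exact hv1, ?_⟩
        have e5 : Γ.dist y x = Γ.dist x y := dist_comm ..
        omega
      rw [← hCeq] at hxC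
      obtain ⟨-, hxC2⟩ := hxC
      have e6 : Γ.dist y' x = Γ.dist x y' := dist_comm ..
      omega
  exact (key y y' hadj hd hfar).antisymm (key y' y hadj.symm (by omega) (by omega))

include hconn hfin hcC hcB in
lemma edgeConst {q a b : V} (hadj : Γ.Adj a b) (ha : R₀ + 2 ≤ Γ.dist q a)
    (hb : R₀ + 2 ≤ Γ.dist q b) :
    Cset Γ q a = Cset Γ q b ∧ Bset Γ q a = Bset Γ q b := by
  have hab : Γ.dist a b = 1 := dist_eq_one_iff_adj.mpr hadj
  have t1 : Γ.dist q b ≤ Γ.dist q a + Γ.dist a b := hconn.dist_triangle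
  have t2 : Γ.dist q a ≤ Γ.dist q b + Γ.dist b a := hconn.dist_triangle
  have e1 : Γ.dist b a = Γ.dist a b := dist_comm ..
  rcases Nat.lt_trichotomy (Γ.dist q a) (Γ.dist q b) with h | h | h
  · exact ⟨upC hconn hfin hcC hadj (by omega) (by omega),
      upB hconn hfin hcB hadj (by omega) (by omega)⟩
  · exact ⟨sameC hconn hfin hcC hcB hadj h.symm ha,
      sameB hconn hfin hcC hcB hadj h.symm ha⟩
  · exact ⟨(upC hconn hfin hcC hadj.symm (by omega) (by omega)).symm,
      (upB hconn hfin hcB hadj.symm (by omega) (by omega)).symm⟩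

include hconn hfin hcB in
lemma Bset_nonempty [Infinite V] {x y : V} (hfar : R₀ < Γ.dist x y) :
    (Bset Γ x y).Nonempty := by
  obtain ⟨v, hv⟩ := exists_dist_eq hconn hfin x (R₀ + 2)
  obtain ⟨p, hadjvp, hp⟩ := exists_closer hconn (x := x) (v := v) (by omega)
  have hmem : v ∈ Bset Γ p x := by
    refine ⟨dist_eq_one_iff_adj.mpr hadjvp.symm, ?_⟩
    have e1 : Γ.dist p x = Γ.dist x p := dist_comm ..
    omega
  have hpos : 0 < (Bset Γ p x).ncard :=
    (Set.ncard_pos (Bset_finite hfin p x)).mpr ⟨v, hmem⟩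
  have hcard := hcB x y p x hfar (by rw [dist_comm]; omega)
  exact Set.nonempty_of_ncard_ne_zero (by omega)

include hconn hfin hcB in
lemma exists_extend [Infinite V] {x y : V} (hfar : R₀ < Γ.dist x y) :
    ∃ y', Γ.Adj y y' ∧ Γ.dist x y' = Γ.dist x y + 1 := by
  have hfar' : R₀ < Γ.dist y x := by rw [dist_comm]; exact hfar
  obtain ⟨w, hw1, hw2⟩ := Bset_nonempty hconn hfin hcB hfar'
  refine ⟨w, dist_eq_one_iff_adj.mp hw1, ?_⟩
  have e1 : Γ.dist y x = Γ.dist x y := dist_comm ..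
  omega

end Structural
end Stmt13Aux

theorem stmt13 {V : Type*} [Infinite V]
    -- D is the arc relation of the digraph, Γ its underlying undirected graph
    (D : V → V → Prop)
    (Γ : SimpleGraph V)
    (hΓ : ∀ x y : V, Γ.Adj x y ↔ (x ≠ y ∧ (D x y ∨ D y x)))
    (hconn : Γ.Connected)
    (hlocfin : ∀ v : V, {w : V | D v w}.Finite ∧ {w : V | D w v}.Finite)
    (hvtxtrans : ∀ u v : V, ∃ g : Equiv.Perm V,
      (∀ a b : V, D (g a) (g b) ↔ D a b) ∧ g u = v)
    (harctrans : ∀ u v x y : V, D u v → D x y →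
      ∃ g : Equiv.Perm V, (∀ a b : V, D (g a) (g b) ↔ D a b) ∧ g u = x ∧ g v = y)
    (α : V) (R₀ : ℕ)
    (hcb : ∀ β γ : V, R₀ < Γ.dist α β → R₀ < Γ.dist α γ →
      {w : V | Γ.dist α w = 1 ∧ Γ.dist β w = Γ.dist α β - 1}.ncard =
        {w : V | Γ.dist α w = 1 ∧ Γ.dist γ w = Γ.dist α γ - 1}.ncard ∧
      {w : V | Γ.dist α w = 1 ∧ Γ.dist β w = Γ.dist α β + 1}.ncard =
        {w : V | Γ.dist α w = 1 ∧ Γ.dist γ w = Γ.dist α γ + 1}.ncard) :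
    ∃ s : Set V, s.Infinite ∧ (sᶜ).Infinite ∧
      {e : V × V | e.1 ∈ s ∧ e.2 ∈ sᶜ ∧ Γ.Adj e.1 e.2}.Finite := by
  classical
  open Stmt13Aux in
  by_contra hng
  -- local finiteness of Γ
  have hfin : ∀ v, (Γ.neighborSet v).Finite := by
    intro v
    refine ((hlocfin v).1.union (hlocfin v).2).subset fun w hw => ?_
    have := (hΓ v w).mp hw
    exact this.2
  -- distance-preserving automorphisms
  have hAuto : ∀ u v : V, ∃ g : Equiv.Perm V,
      (∀ a b : V, Γ.dist (g a) (g b) = Γ.dist a b) ∧ g u = v := by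
    have hkey : ∀ g : Equiv.Perm V, (∀ a b : V, D (g a) (g b) ↔ D a b) →
        ∀ a b : V, Γ.Adj (g a) (g b) ↔ Γ.Adj a b := by
      intro g hg a b
      simp only [hΓ, g.injective.ne_iff, hg]
    have hle : ∀ g : Equiv.Perm V, (∀ a b : V, D (g a) (g b) ↔ D a b) →
        ∀ a b : V, Γ.dist (g a) (g b) ≤ Γ.dist a b := by
      intro g hg a b
      obtain ⟨p, hp⟩ := hconn.exists_walk_length_eq_dist a b
      let f : Γ →g Γ := ⟨g, fun {u v} h => (hkey g hg u v).mpr h⟩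
      have := SimpleGraph.dist_le (p.map f)
      rwa [SimpleGraph.Walk.length_map, hp] at this
    intro u v
    obtain ⟨g, hg, hgu⟩ := hvtxtrans u v
    refine ⟨g, fun a b => ?_, hgu⟩
    have hg' : ∀ a b : V, D (g⁻¹ a) (g⁻¹ b) ↔ D a b := by
      intro a b
      conv_rhs => rw [← g.apply_symm_apply a, ← g.apply_symm_apply b]
      exact (hg _ _).symm
    have h1 := hle g hg a b
    have h2 := hle g⁻¹ hg' (g a) (g b)
    rw [show g⁻¹ (g a) = a from g.symm_apply_apply a, show g⁻¹ (g b) = b from g.symm_apply_apply b] at h2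
    omega
  -- transported counting constants
  have himC : ∀ (g : Equiv.Perm V), (∀ a b : V, Γ.dist (g a) (g b) = Γ.dist a b) →
      ∀ x y : V, g '' Cset Γ x y = Cset Γ (g x) (g y) := by
    intro g hg x y
    ext w
    constructor
    · rintro ⟨u, ⟨hu1, hu2⟩, rfl⟩
      exact ⟨by rw [hg]; exact hu1, by rw [hg, hg]; exact hu2⟩
    · rintro ⟨hw1, hw2⟩
      refine ⟨g⁻¹ w, ⟨?_, ?_⟩, by simp⟩
      · have := hg x (g⁻¹ w); rw [show g (g⁻¹ w) = w from g.apply_symm_apply w] at this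
        rw [← this]; exact hw1
      · have h1 := hg y (g⁻¹ w); have h2 := hg x y
        rw [show g (g⁻¹ w) = w from g.apply_symm_apply w] at h1
        show Γ.dist y (g⁻¹ w) = Γ.dist x y - 1
        rw [← h1, ← h2]; exact hw2
  have himB : ∀ (g : Equiv.Perm V), (∀ a b : V, Γ.dist (g a) (g b) = Γ.dist a b) →
      ∀ x y : V, g '' Bset Γ x y = Bset Γ (g x) (g y) := by
    intro g hg x y
    ext w
    constructor
    · rintro ⟨u, ⟨hu1, hu2⟩, rfl⟩
      exact ⟨by rw [hg]; exact hu1, by rw [hg, hg]; exact hu2⟩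
    · rintro ⟨hw1, hw2⟩
      refine ⟨g⁻¹ w, ⟨?_, ?_⟩, by simp⟩
      · have := hg x (g⁻¹ w); rw [show g (g⁻¹ w) = w from g.apply_symm_apply w] at this
        rw [← this]; exact hw1
      · have h1 := hg y (g⁻¹ w); have h2 := hg x y
        rw [show g (g⁻¹ w) = w from g.apply_symm_apply w] at h1
        show Γ.dist y (g⁻¹ w) = Γ.dist x y + 1
        rw [← h1, ← h2]; exact hw2
  have hcCB : ∀ x y x' y', R₀ < Γ.dist x y → R₀ < Γ.dist x' y' →
      (Cset Γ x y).ncard = (Cset Γ x' y').ncard ∧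
      (Bset Γ x y).ncard = (Bset Γ x' y').ncard := by
    intro x y x' y' h1 h2
    obtain ⟨g, hg, hgx⟩ := hAuto x α
    obtain ⟨g', hg', hgx'⟩ := hAuto x' α
    have hd1 : Γ.dist α (g y) = Γ.dist x y := by rw [← hgx]; exact hg x y
    have hd2 : Γ.dist α (g' y') = Γ.dist x' y' := by rw [← hgx']; exact hg' x' y'
    have hC1 : (Cset Γ x y).ncard = (Cset Γ α (g y)).ncard := by
      rw [← hgx, ← himC g hg, Set.ncard_image_of_injective _ g.injective]
    have hC2 : (Cset Γ x' y').ncard = (Cset Γ α (g' y')).ncard := by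
      rw [← hgx', ← himC g' hg', Set.ncard_image_of_injective _ g'.injective]
    have hB1 : (Bset Γ x y).ncard = (Bset Γ α (g y)).ncard := by
      rw [← hgx, ← himB g hg, Set.ncard_image_of_injective _ g.injective]
    have hB2 : (Bset Γ x' y').ncard = (Bset Γ α (g' y')).ncard := by
      rw [← hgx', ← himB g' hg', Set.ncard_image_of_injective _ g'.injective]
    obtain ⟨hc, hb⟩ := hcb (g y) (g' y') (by omega) (by omega)
    exact ⟨by rw [hC1, hC2]; exact hc, by rw [hB1, hB2]; exact hb⟩
  have hcC : ∀ x y x' y', R₀ < Γ.dist x y → R₀ < Γ.dist x' y' →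
      (Cset Γ x y).ncard = (Cset Γ x' y').ncard := fun x y x' y' h1 h2 =>
    (hcCB x y x' y' h1 h2).1
  have hcB : ∀ x y x' y', R₀ < Γ.dist x y → R₀ < Γ.dist x' y' →
      (Bset Γ x y).ncard = (Bset Γ x' y').ncard := fun x y x' y' h1 h2 =>
    (hcCB x y x' y' h1 h2).2
    -- the graph restricted to vertices far from q
  let G' : V → SimpleGraph V := fun q =>
    { Adj := fun a b => Γ.Adj a b ∧ R₀ + 2 ≤ Γ.dist q a ∧ R₀ + 2 ≤ Γ.dist q b
      symm := ⟨fun a b h => ⟨h.1.symm, h.2.2, h.2.1⟩⟩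
      loopless := ⟨fun a h => Γ.loopless.irrefl a h.1⟩ }
  have hG'adj : ∀ q a b : V, (G' q).Adj a b ↔
      (Γ.Adj a b ∧ R₀ + 2 ≤ Γ.dist q a ∧ R₀ + 2 ≤ Γ.dist q b) := fun _ _ _ => Iff.rfl
  have hwalkfar : ∀ q a b : V, (G' q).Walk a b → a = b ∨ R₀ + 2 ≤ Γ.dist q b := by
    intro q a b p
    induction p with
    | nil => exact Or.inl rfl
    | cons h p ih =>
      rcases ih with rfl | hb
      · exact Or.inr ((hG'adj _ _ _).mp h).2.2
      · exact Or.inr hb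
  have hreachfar : ∀ q a b : V, (G' q).Reachable a b → R₀ + 2 ≤ Γ.dist q a →
      R₀ + 2 ≤ Γ.dist q b := by
    intro q a b h ha
    obtain ⟨p⟩ := h
    rcases hwalkfar q a b p with rfl | hb
    · exact ha
    · exact hb
  have hwalkconst : ∀ q a b : V, (G' q).Walk a b →
      Cset Γ q a = Cset Γ q b ∧ Bset Γ q a = Bset Γ q b := by
    intro q a b p
    induction p with
    | nil => exact ⟨rfl, rfl⟩
    | cons h p ih =>
      obtain ⟨h1, h2, h3⟩ := (hG'adj _ _ _).mp h
      have e := edgeConst hconn hfin hcC hcB h1 h2 h3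
      exact ⟨e.1.trans ih.1, e.2.trans ih.2⟩
  have hA : ∀ q n v, Γ.dist q v = n → R₀ + 2 ≤ n →
      ∃ w, Γ.dist q w = R₀ + 2 ∧ (G' q).Reachable w v := by
    intro q n
    induction n using Nat.strong_induction_on with
    | _ n ih =>
      intro v hv hn
      by_cases heq : n = R₀ + 2
      · exact ⟨v, by omega, SimpleGraph.Reachable.refl v⟩
      · obtain ⟨w', hadj, hw'⟩ := exists_closer hconn (x := q) (v := v) (by omega)
        obtain ⟨w, hw1, hw2⟩ := ih (n - 1) (by omega) w' (by omega) (by omega)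
        have hedge : (G' q).Adj w' v := (hG'adj _ _ _).mpr ⟨hadj.symm, by omega, by omega⟩
        exact ⟨w, hw1, hw2.trans hedge.reachable⟩
  have hUnique : ∀ q : V, ∃ R', R₀ + 2 ≤ R' ∧ ∀ v v', R' ≤ Γ.dist q v →
      R' ≤ Γ.dist q v' → (G' q).Reachable v v' := by
    intro q
    set K : V → Set V := fun w => {v | (G' q).Reachable w v} with hK
    have hSfin : {w | Γ.dist q w = R₀ + 2}.Finite :=
      (ball_finite hconn hfin q (R₀ + 2)).subset fun w hw => le_of_eq hw
    have hFfin : (⋃ w ∈ {w | Γ.dist q w = R₀ + 2 ∧ (K w).Finite}, K w).Finite :=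
      Set.Finite.biUnion (hSfin.subset fun w hw => hw.1) fun w hw => hw.2
    obtain ⟨N₀, hN₀⟩ : ∃ N₀, ∀ v ∈ (⋃ w ∈ {w | Γ.dist q w = R₀ + 2 ∧ (K w).Finite}, K w),
        Γ.dist q v ≤ N₀ := by
      obtain ⟨N₀, hN₀⟩ := (hFfin.image (Γ.dist q)).bddAbove
      exact ⟨N₀, fun v hv => hN₀ (Set.mem_image_of_mem _ hv)⟩
    have hinfreach : ∀ w w', Γ.dist q w = R₀ + 2 → Γ.dist q w' = R₀ + 2 →
        (K w).Infinite → (K w').Infinite → (G' q).Reachable w w' := by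
      intro w w' hw hw' hi hi'
      by_contra hnr
      have hbig : (⋃ b ∈ {u | Γ.dist q u ≤ R₀ + 1}, (Γ.neighborSet b ×ˢ ({b} : Set V))).Finite :=
        Set.Finite.biUnion (ball_finite hconn hfin q (R₀ + 1))
          (fun b _ => (hfin b).prod (Set.finite_singleton b))
      refine hng ⟨K w, hi, ?_, ?_⟩
      · exact hi'.mono fun v hv hvK => hnr (hvK.trans hv.symm)
      · refine hbig.subset ?_
        rintro ⟨e1, e2⟩ ⟨he1, he2, headj⟩
        have hfar1 : R₀ + 2 ≤ Γ.dist q e1 := hreachfar q w e1 he1 (by omega)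
        have hb : ¬ (R₀ + 2 ≤ Γ.dist q e2) := by
          intro hfar2
          exact he2 (he1.trans (SimpleGraph.Adj.reachable
            ((hG'adj _ _ _).mpr ⟨headj, hfar1, hfar2⟩)))
        exact Set.mem_biUnion (show Γ.dist q e2 ≤ R₀ + 1 by omega)
          (⟨headj.symm, rfl⟩ : (e1, e2) ∈ Γ.neighborSet e2 ×ˢ ({e2} : Set V))
    refine ⟨max (R₀ + 2) (N₀ + 1), le_max_left _ _, fun v v' hv hv' => ?_⟩
    have hv2 : R₀ + 2 ≤ Γ.dist q v := le_trans (le_max_left _ _) hv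
    have hv2' : R₀ + 2 ≤ Γ.dist q v' := le_trans (le_max_left _ _) hv'
    have hv3 : N₀ + 1 ≤ Γ.dist q v := le_trans (le_max_right _ _) hv
    have hv3' : N₀ + 1 ≤ Γ.dist q v' := le_trans (le_max_right _ _) hv'
    obtain ⟨w, hw1, hw2⟩ := hA q (Γ.dist q v) v rfl hv2
    obtain ⟨w', hw'1, hw'2⟩ := hA q (Γ.dist q v') v' rfl hv2'
    have hKwinf : (K w).Infinite := by
      by_contra hf
      rw [Set.not_infinite] at hf
      have hmem := Set.mem_biUnion (show w ∈ {w | Γ.dist q w = R₀ + 2 ∧ (K w).Finite}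
        from ⟨hw1, hf⟩) (show v ∈ K w from hw2)
      have := hN₀ v hmem
      omega
    have hKw'inf : (K w').Infinite := by
      by_contra hf
      rw [Set.not_infinite] at hf
      have hmem := Set.mem_biUnion (show w' ∈ {w | Γ.dist q w = R₀ + 2 ∧ (K w).Finite}
        from ⟨hw'1, hf⟩) (show v' ∈ K w' from hw'2)
      have := hN₀ v' hmem
      omega
    exact hw2.symm.trans ((hinfreach w w' hw1 hw'1 hKwinf hKw'inf).trans hw'2)
  have hconstFar : ∀ q : V, ∃ R', R₀ + 2 ≤ R' ∧ ∀ v v', R' ≤ Γ.dist q v →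
      R' ≤ Γ.dist q v' → Cset Γ q v = Cset Γ q v' ∧ Bset Γ q v = Bset Γ q v' := by
    intro q
    obtain ⟨R', hR1, hR2⟩ := hUnique q
    refine ⟨R', hR1, fun v v' hv hv' => ?_⟩
    obtain ⟨p⟩ := hR2 v v' hv hv'
    exact hwalkconst q v v' p
  have hkey : ∀ p : V, ∃ (F : ℤ) (T : ℕ), ∀ v, T ≤ Γ.dist α v →
      (Γ.dist p v : ℤ) - (Γ.dist α v : ℤ) = F := by
    have hstep : ∀ a c : V, Γ.Adj a c →
        (∃ (F : ℤ) (T : ℕ), ∀ v, T ≤ Γ.dist α v → (Γ.dist a v : ℤ) - (Γ.dist α v : ℤ) = F) →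
        (∃ (F : ℤ) (T : ℕ), ∀ v, T ≤ Γ.dist α v → (Γ.dist c v : ℤ) - (Γ.dist α v : ℤ) = F) := by
      rintro a c hadj ⟨F, T, hF⟩
      obtain ⟨R', hR'1, hR'2⟩ := hconstFar a
      set T₂ := T + R' + Γ.dist α a with hT₂
      have hfarv : ∀ v, T₂ ≤ Γ.dist α v → R' ≤ Γ.dist a v := by
        intro v hv
        have := hconn.dist_triangle (u := α) (v := a) (w := v)
        omega
      obtain ⟨v₀, hv₀⟩ := exists_dist_eq hconn hfin α T₂
      have hdc : Γ.dist a c = 1 := dist_eq_one_iff_adj.mpr hadj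
      by_cases h1 : c ∈ Cset Γ a v₀
      · refine ⟨F - 1, T₂, fun v hv => ?_⟩
        have hCC := (hR'2 v v₀ (hfarv v hv) (hfarv v₀ (le_of_eq hv₀.symm))).1
        have hc : c ∈ Cset Γ a v := by rw [hCC]; exact h1
        obtain ⟨-, hc2⟩ := hc
        have hge : R' ≤ Γ.dist a v := hfarv v hv
        have hF' := hF v (by omega)
        have e1 : Γ.dist c v = Γ.dist v c := dist_comm ..
        omega
      · by_cases h2 : c ∈ Bset Γ a v₀
        · refine ⟨F + 1, T₂, fun v hv => ?_⟩
          have hBB := (hR'2 v v₀ (hfarv v hv) (hfarv v₀ (le_of_eq hv₀.symm))).2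
          have hc : c ∈ Bset Γ a v := by rw [hBB]; exact h2
          obtain ⟨-, hc2⟩ := hc
          have hF' := hF v (by omega)
          have e1 : Γ.dist c v = Γ.dist v c := dist_comm ..
          omega
        · refine ⟨F, T₂, fun v hv => ?_⟩
          have hCC := hR'2 v v₀ (hfarv v hv) (hfarv v₀ (le_of_eq hv₀.symm))
          have hnc : Γ.dist v c ≠ Γ.dist a v - 1 := fun hh =>
            h1 (by rw [← hCC.1]; exact ⟨hdc, hh⟩)
          have hnb : Γ.dist v c ≠ Γ.dist a v + 1 := fun hh =>
            h2 (by rw [← hCC.2]; exact ⟨hdc, hh⟩)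
          have t1 : Γ.dist v c ≤ Γ.dist v a + Γ.dist a c := hconn.dist_triangle
          have t2 : Γ.dist v a ≤ Γ.dist v c + Γ.dist c a := hconn.dist_triangle
          have e1 : Γ.dist v a = Γ.dist a v := dist_comm ..
          have e2 : Γ.dist c a = Γ.dist a c := dist_comm ..
          have e3 : Γ.dist c v = Γ.dist v c := dist_comm ..
          have hge : R' ≤ Γ.dist a v := hfarv v hv
          have hF' := hF v (by omega)
          omega
    have hwalkP : ∀ a b : V, Γ.Walk a b →
        (∃ (F : ℤ) (T : ℕ), ∀ v, T ≤ Γ.dist α v → (Γ.dist a v : ℤ) - (Γ.dist α v : ℤ) = F) →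
        (∃ (F : ℤ) (T : ℕ), ∀ v, T ≤ Γ.dist α v → (Γ.dist b v : ℤ) - (Γ.dist α v : ℤ) = F) := by
      intro a b w
      induction w with
      | nil => exact id
      | cons h w ih => exact fun hPa => ih (hstep _ _ h hPa)
    intro p
    obtain ⟨pw⟩ := hconn.preconnected α p
    exact hwalkP α p pw ⟨0, 0, fun v _ => by omega⟩
  obtain ⟨v₀, hv₀⟩ := exists_dist_eq hconn hfin α (R₀ + 1)
  obtain ⟨F, T, hF⟩ := hkey v₀
  have ray1 : ∀ t, ∃ w, Γ.dist α w = (R₀ + 1) + t ∧ Γ.dist v₀ w = t := by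
    intro t
    induction t with
    | zero => exact ⟨v₀, by omega, by simp⟩
    | succ t ih =>
      obtain ⟨w, h1, h2⟩ := ih
      obtain ⟨w', hadj, h3⟩ := exists_extend hconn hfin hcB (x := α) (y := w) (by omega)
      refine ⟨w', by omega, ?_⟩
      have t1 : Γ.dist v₀ w' ≤ Γ.dist v₀ w + Γ.dist w w' := hconn.dist_triangle
      have t2 : Γ.dist α w' ≤ Γ.dist α v₀ + Γ.dist v₀ w' := hconn.dist_triangle
      have e1 : Γ.dist w w' = 1 := dist_eq_one_iff_adj.mpr hadj
      omega
  have ray2 : ∀ t, ∃ u, Γ.dist v₀ u = (R₀ + 1) + t ∧ Γ.dist α u = t := by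
    intro t
    induction t with
    | zero =>
      refine ⟨α, ?_, by simp⟩
      rw [dist_comm]; omega
    | succ t ih =>
      obtain ⟨u, h1, h2⟩ := ih
      obtain ⟨u', hadj, h3⟩ := exists_extend hconn hfin hcB (x := v₀) (y := u) (by omega)
      refine ⟨u', by omega, ?_⟩
      have t1 : Γ.dist α u' ≤ Γ.dist α u + Γ.dist u u' := hconn.dist_triangle
      have t2 : Γ.dist v₀ u' ≤ Γ.dist v₀ α + Γ.dist α u' := hconn.dist_triangle
      have e1 : Γ.dist u u' = 1 := dist_eq_one_iff_adj.mpr hadj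
      have e2 : Γ.dist v₀ α = Γ.dist α v₀ := dist_comm ..
      omega
  obtain ⟨w, hw1, hw2⟩ := ray1 T
  obtain ⟨u, hu1, hu2⟩ := ray2 T
  have hFw := hF w (by omega)
  have hFu := hF u (by omega)
  rw [hw1, hw2] at hFw
  rw [hu1, hu2] at hFu
  omega
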